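/- Let d ≥ 1, γ > 0, and let D_r and D_n be Borel probability measures on ℝ^d with E_{D_r}[‖x‖₂] < ∞ and E_{D_n}[‖x‖₂] < ∞. Assume the class S^d(γ,1) of star bodies K with γ·B^d ⊆ ker(K) and vol_d(K) = 1 is nonempty. Then F(·; D_r, D_n) attains its minimum over S^d(γ,1): there exists K* ∈ S^d(γ,1) such that F(K*; D_r, D_n) ≤ F(K; D_r, D_n) for every K ∈ S^d(γ,1). -/

import Mathlib

open MeasureTheory Metric Set Filter Pointwise

noncomputable section

abbrev Euc (d : ℕ) : Type := EuclideanSpace ℝ (Fin d)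

/-- Radial function of a set: `ρ_K(x) = sup {t > 0 : t • x ∈ K}`. -/
def radialFn {d : ℕ} (K : Set (Euc d)) (x : Euc d) : ℝ :=
  sSup {t : ℝ | 0 < t ∧ t • x ∈ K}

/-- A star body: compact, `0` in the interior, star-shaped about `0`, with radial function
positive and continuous on the unit sphere. -/
def IsStarBody {d : ℕ} (K : Set (Euc d)) : Prop :=
  IsCompact K ∧ (0 : Euc d) ∈ interior K ∧
    (∀ x ∈ K, segment ℝ 0 x ⊆ K) ∧
    (∀ u ∈ sphere (0 : Euc d) 1, 0 < radialFn K u) ∧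
    ContinuousOn (radialFn K) (sphere (0 : Euc d) 1)

/-- The kernel of a star body. -/
def starKernel {d : ℕ} (K : Set (Euc d)) : Set (Euc d) :=
  {x | x ∈ K ∧ ∀ y ∈ K, segment ℝ x y ⊆ K}

/-- Radial metric between star bodies. -/
def radialDist {d : ℕ} (K L : Set (Euc d)) : ℝ :=
  ⨆ u : sphere (0 : Euc d) 1, |radialFn K (u : Euc d) - radialFn L (u : Euc d)|

/-- The adversarial objective `F(K; μ, ν) = E_μ[‖x‖_K] - E_ν[‖x‖_K]`. -/
def Fobj {d : ℕ} (K : Set (Euc d)) (μ ν : Measure (Euc d)) : ℝ :=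
  (∫ x, gauge K x ∂μ) - (∫ x, gauge K x ∂ν)



open BoundedContinuousFunction

namespace SBaux
variable {d : ℕ}

lemma dir_mem_sphere {x : Euc d} (hx : x ≠ 0) : ‖x‖⁻¹ • x ∈ sphere (0 : Euc d) 1 := by
  simp [mem_sphere_zero_iff_norm, norm_smul, abs_of_nonneg (norm_nonneg x),
    inv_mul_cancel₀ (norm_ne_zero_iff.2 hx)]

open Classical in
/-- Homogeneous extension of a function on the sphere. -/
def extFn (f : sphere (0 : Euc d) 1 →ᵇ ℝ) (x : Euc d) : ℝ :=
  if hx : x = 0 then 0 else ‖x‖ * f ⟨‖x‖⁻¹ • x, dir_mem_sphere hx⟩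

@[simp] lemma extFn_zero (f : sphere (0 : Euc d) 1 →ᵇ ℝ) : extFn f 0 = 0 := by
  simp [extFn]

lemma extFn_of_ne (f : sphere (0 : Euc d) 1 →ᵇ ℝ) {x : Euc d} (hx : x ≠ 0) :
    extFn f x = ‖x‖ * f ⟨‖x‖⁻¹ • x, dir_mem_sphere hx⟩ := by
  rw [extFn, dif_neg hx]

lemma f_congr (f : sphere (0 : Euc d) 1 →ᵇ ℝ) {x y : Euc d} (hx : x ∈ sphere (0:Euc d) 1)
    (hy : y ∈ sphere (0:Euc d) 1) (h : x = y) : f ⟨x, hx⟩ = f ⟨y, hy⟩ := by subst h; rfl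

lemma extFn_sphere (f : sphere (0 : Euc d) 1 →ᵇ ℝ) (u : sphere (0 : Euc d) 1) :
    extFn f (u : Euc d) = f u := by
  have hu : ‖(u : Euc d)‖ = 1 := mem_sphere_zero_iff_norm.1 u.2
  have hne : (u : Euc d) ≠ 0 := by intro h; rw [h] at hu; simp at hu
  rw [extFn_of_ne f hne, f_congr f (dir_mem_sphere hne) u.2 (by rw [hu]; simp), hu, one_mul,
    Subtype.coe_eta]

lemma extFn_smul (f : sphere (0 : Euc d) 1 →ᵇ ℝ) {t : ℝ} (ht : 0 ≤ t) (x : Euc d) :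
    extFn f (t • x) = t * extFn f x := by
  rcases eq_or_lt_of_le ht with rfl | ht
  · simp
  rcases eq_or_ne x 0 with rfl | hx
  · simp
  have htx : t • x ≠ 0 := smul_ne_zero (ne_of_gt ht) hx
  have hn : ‖t • x‖ = t * ‖x‖ := by rw [norm_smul, Real.norm_eq_abs, abs_of_pos ht]
  have hdir : ‖t • x‖⁻¹ • (t • x) = ‖x‖⁻¹ • x := by
    rw [hn, mul_comm, mul_inv, smul_smul, mul_assoc, inv_mul_cancel₀ (ne_of_gt ht), mul_one]
  rw [extFn_of_ne f htx, extFn_of_ne f hx,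
    f_congr f (dir_mem_sphere htx) (dir_mem_sphere hx) hdir, hn, mul_assoc]

/-- The constraint class, as a predicate on bounded continuous functions on the sphere:
pointwise bounds and a Lipschitz-type estimate for the homogeneous extension. -/
def goodFun (γ c : ℝ) (f : sphere (0 : Euc d) 1 →ᵇ ℝ) : Prop :=
  (∀ u, c ≤ f u ∧ f u ≤ γ⁻¹) ∧
    ∀ x y : Euc d, extFn f x ≤ extFn f y + γ⁻¹ * ‖x - y‖

variable {γ c : ℝ}

lemma goodFun.le_norm {f} (hf : goodFun (d := d) γ c f) (x : Euc d) :
    extFn f x ≤ γ⁻¹ * ‖x‖ := by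
  rcases eq_or_ne x 0 with rfl | hx
  · simp
  · rw [extFn_of_ne f hx, mul_comm]
    exact mul_le_mul_of_nonneg_right (hf.1 _).2 (norm_nonneg x)

lemma goodFun.norm_le {f} (hf : goodFun (d := d) γ c f) (x : Euc d) :
    c * ‖x‖ ≤ extFn f x := by
  rcases eq_or_ne x 0 with rfl | hx
  · simp
  · rw [extFn_of_ne f hx, mul_comm ‖x‖ _]
    exact mul_le_mul_of_nonneg_right (hf.1 _).1 (norm_nonneg x)

lemma goodFun.nonneg (hc : 0 ≤ c) {f} (hf : goodFun (d := d) γ c f) (x : Euc d) :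
    0 ≤ extFn f x :=
  le_trans (by positivity) (hf.norm_le x)

lemma goodFun.abs_sub_le {f} (hf : goodFun (d := d) γ c f) (x y : Euc d) :
    |extFn f x - extFn f y| ≤ γ⁻¹ * ‖x - y‖ := by
  rw [abs_sub_le_iff]
  constructor
  · linarith [hf.2 x y]
  · have := hf.2 y x
    rw [norm_sub_rev] at this
    linarith

lemma goodFun.lipschitzWith (hγ : 0 < γ) {f} (hf : goodFun (d := d) γ c f) :
    LipschitzWith (Real.toNNReal γ⁻¹) (extFn f) := by
  apply LipschitzWith.of_dist_le_mul
  intro x y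
  rw [Real.dist_eq, dist_eq_norm, Real.coe_toNNReal _ (by positivity)]
  exact hf.abs_sub_le x y

lemma goodFun.continuous (hγ : 0 < γ) {f} (hf : goodFun (d := d) γ c f) :
    Continuous (extFn f) := (hf.lipschitzWith hγ).continuous

/-- The body associated to a good function. -/
def bodyOf (f : sphere (0 : Euc d) 1 →ᵇ ℝ) : Set (Euc d) := {x | extFn f x ≤ 1}

lemma gauge_bodyOf (hc : 0 ≤ c) {f} (hf : goodFun (d := d) γ c f) :
    gauge (bodyOf f) = extFn f := by
  funext x
  rw [gauge_def]
  have hmem : ∀ t : ℝ, 0 < t → (x ∈ t • bodyOf f ↔ extFn f x ≤ t) := by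
    intro t ht
    rw [mem_smul_set_iff_inv_smul_mem₀ (ne_of_gt ht)]
    show extFn f (t⁻¹ • x) ≤ 1 ↔ _
    rw [extFn_smul f (by positivity) x, inv_mul_le_one₀ ht]
  rcases eq_or_lt_of_le (hf.nonneg hc x) with h0 | hpos
  · have : {t : ℝ | t ∈ Set.Ioi (0:ℝ) ∧ x ∈ t • bodyOf f} = Set.Ioi 0 := by
      ext t; simp only [Set.mem_setOf_eq, Set.mem_Ioi]
      exact ⟨fun h => h.1, fun h => ⟨h, (hmem t h).2 (by rw [← h0]; exact le_of_lt h)⟩⟩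
    rw [this, csInf_Ioi, ← h0]
  · have : {t : ℝ | t ∈ Set.Ioi (0:ℝ) ∧ x ∈ t • bodyOf f} = Set.Ici (extFn f x) := by
      ext t; simp only [Set.mem_setOf_eq, Set.mem_Ioi, Set.mem_Ici]
      constructor
      · rintro ⟨ht, hx⟩; exact (hmem t ht).1 hx
      · intro h
        have ht : 0 < t := lt_of_lt_of_le hpos h
        exact ⟨ht, (hmem t ht).2 h⟩
    rw [this, csInf_Ici]

lemma closedBall_subset_bodyOf (hγ : 0 < γ) {f} (hf : goodFun (d := d) γ c f) :
    closedBall (0 : Euc d) γ ⊆ bodyOf f := by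
  intro x hx
  rw [mem_closedBall, dist_zero_right] at hx
  show extFn f x ≤ 1
  calc extFn f x ≤ γ⁻¹ * ‖x‖ := hf.le_norm x
    _ ≤ γ⁻¹ * γ := mul_le_mul_of_nonneg_left hx (by positivity)
    _ = 1 := inv_mul_cancel₀ (ne_of_gt hγ)

lemma bodyOf_subset_closedBall (hc : 0 < c) {f} (hf : goodFun (d := d) γ c f) :
    bodyOf f ⊆ closedBall (0 : Euc d) c⁻¹ := by
  intro x hx
  rw [mem_closedBall, dist_zero_right]
  have h1 : c * ‖x‖ ≤ 1 := le_trans (hf.norm_le x) hx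
  rw [← mul_le_mul_iff_right₀ hc, mul_inv_cancel₀ (ne_of_gt hc)]
  exact h1

lemma isCompact_bodyOf (hγ : 0 < γ) (hc : 0 < c) {f} (hf : goodFun (d := d) γ c f) :
    IsCompact (bodyOf f) := by
  refine (isCompact_closedBall (0 : Euc d) c⁻¹).of_isClosed_subset ?_
    (bodyOf_subset_closedBall hc hf)
  exact isClosed_le (hf.continuous hγ) continuous_const

lemma starShaped_bodyOf (hc : 0 ≤ c) {f} (hf : goodFun (d := d) γ c f) :
    ∀ x ∈ bodyOf f, segment ℝ 0 x ⊆ bodyOf f := by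
  rintro x hx p ⟨a, b, ha, hb, hab, rfl⟩
  show extFn f (a • 0 + b • x) ≤ 1
  rw [smul_zero, zero_add, extFn_smul f hb]
  calc b * extFn f x ≤ b * 1 := by
        exact mul_le_mul_of_nonneg_left hx hb
    _ ≤ 1 := by linarith

lemma kernel_bodyOf (hγ : 0 < γ) {f} (hf : goodFun (d := d) γ c f) :
    closedBall (0 : Euc d) γ ⊆ starKernel (bodyOf f) := by
  intro z hz
  refine ⟨closedBall_subset_bodyOf hγ hf hz, ?_⟩
  rintro y hy p ⟨a, b, ha, hb, hab, rfl⟩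
  show extFn f (a • z + b • y) ≤ 1
  have h1 := hf.2 (a • z + b • y) (b • y)
  rw [add_sub_cancel_right, extFn_smul f hb] at h1
  have hz' : ‖z‖ ≤ γ := by rwa [mem_closedBall, dist_zero_right] at hz
  have h2 : ‖a • z‖ ≤ a * γ := by
    rw [norm_smul, Real.norm_eq_abs, abs_of_nonneg ha]
    exact mul_le_mul_of_nonneg_left hz' ha
  have h3 : γ⁻¹ * ‖a • z‖ ≤ a := by
    calc γ⁻¹ * ‖a • z‖ ≤ γ⁻¹ * (a * γ) := mul_le_mul_of_nonneg_left h2 (by positivity)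
      _ = a := by field_simp
  have h4 : b * extFn f y ≤ b := by
    calc b * extFn f y ≤ b * 1 := mul_le_mul_of_nonneg_left hy hb
      _ = b := mul_one b
  linarith

lemma radialFn_bodyOf (hγ : 0 < γ) (hc : 0 < c) {f} (hf : goodFun (d := d) γ c f)
    (u : sphere (0 : Euc d) 1) : radialFn (bodyOf f) (u : Euc d) = (f u)⁻¹ := by
  have hfu : 0 < f u := lt_of_lt_of_le hc (hf.1 u).1
  have hset : {t : ℝ | 0 < t ∧ t • (u : Euc d) ∈ bodyOf f} = Set.Ioc 0 (f u)⁻¹ := by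
    ext t
    simp only [Set.mem_setOf_eq, Set.mem_Ioc]
    constructor
    · rintro ⟨ht, htu⟩
      refine ⟨ht, ?_⟩
      have : extFn f (t • (u : Euc d)) ≤ 1 := htu
      rw [extFn_smul f (le_of_lt ht), extFn_sphere] at this
      rw [← one_div, le_div_iff₀ hfu]
      exact this
    · rintro ⟨ht, htu⟩
      refine ⟨ht, ?_⟩
      show extFn f (t • (u : Euc d)) ≤ 1
      rw [extFn_smul f (le_of_lt ht), extFn_sphere]
      rw [← one_div, le_div_iff₀ hfu] at htu
      exact htu
  rw [radialFn, hset, csSup_Ioc (by positivity)]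

lemma isStarBody_bodyOf (hγ : 0 < γ) (hc : 0 < c) {f} (hf : goodFun (d := d) γ c f) :
    IsStarBody (bodyOf f) := by
  refine ⟨isCompact_bodyOf hγ hc hf, ?_, starShaped_bodyOf (le_of_lt hc) hf, ?_, ?_⟩
  · have h1 : ball (0 : Euc d) γ ⊆ bodyOf f :=
      (ball_subset_closedBall).trans (closedBall_subset_bodyOf hγ hf)
    exact interior_maximal h1 isOpen_ball (mem_ball_self hγ)
  · intro u hu
    rw [radialFn_bodyOf hγ hc hf ⟨u, hu⟩]
    have : 0 < f ⟨u, hu⟩ := lt_of_lt_of_le hc (hf.1 _).1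
    positivity
  · have hcont : ContinuousOn (fun x => (extFn f x)⁻¹) (sphere (0 : Euc d) 1) := by
      apply ContinuousOn.inv₀ (hf.continuous hγ).continuousOn
      intro x hx
      have h1 : c * ‖x‖ ≤ extFn f x := hf.norm_le x
      rw [mem_sphere_zero_iff_norm] at hx
      rw [hx, mul_one] at h1
      exact ne_of_gt (lt_of_lt_of_le hc h1)
    apply hcont.congr
    intro x hx
    rw [radialFn_bodyOf hγ hc hf ⟨x, hx⟩]
    exact congrArg Inv.inv (extFn_sphere f ⟨x, hx⟩).symm

lemma bodyOf_subset_smul (hc : 0 < c) {f f'} (hf : goodFun (d := d) γ c f)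
    (hf' : goodFun (d := d) γ c f') :
    bodyOf f ⊆ (1 + dist f f' * c⁻¹) • bodyOf f' := by
  intro x hx
  have hε : 0 ≤ dist f f' := dist_nonneg
  have hδ : (0:ℝ) < 1 + dist f f' * c⁻¹ := by positivity
  rw [mem_smul_set_iff_inv_smul_mem₀ (ne_of_gt hδ)]
  show extFn f' ((1 + dist f f' * c⁻¹)⁻¹ • x) ≤ 1
  rw [extFn_smul f' (by positivity)]
  have hxR : ‖x‖ ≤ c⁻¹ := by
    have := bodyOf_subset_closedBall hc hf hx
    rwa [mem_closedBall, dist_zero_right] at this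
  have key : extFn f' x ≤ 1 + dist f f' * c⁻¹ := by
    rcases eq_or_ne x 0 with rfl | hx0
    · simp; positivity
    · have h1 : extFn f' x ≤ extFn f x + dist f f' * ‖x‖ := by
        rw [extFn_of_ne f hx0, extFn_of_ne f' hx0]
        have h2 : f' ⟨‖x‖⁻¹ • x, dir_mem_sphere hx0⟩ ≤
            f ⟨‖x‖⁻¹ • x, dir_mem_sphere hx0⟩ + dist f f' := by
          have := BoundedContinuousFunction.dist_coe_le_dist
            (f := f') (g := f) (⟨‖x‖⁻¹ • x, dir_mem_sphere hx0⟩)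
          rw [Real.dist_eq] at this
          have := abs_le.1 this
          rw [dist_comm]
          linarith [this.2]
        calc ‖x‖ * f' ⟨‖x‖⁻¹ • x, dir_mem_sphere hx0⟩
            ≤ ‖x‖ * (f ⟨‖x‖⁻¹ • x, dir_mem_sphere hx0⟩ + dist f f') := by
              exact mul_le_mul_of_nonneg_left h2 (norm_nonneg x)
          _ = ‖x‖ * f ⟨‖x‖⁻¹ • x, dir_mem_sphere hx0⟩ + dist f f' * ‖x‖ := by ring
      have h3 : dist f f' * ‖x‖ ≤ dist f f' * c⁻¹ := by gcongr
      have h4 : extFn f x ≤ 1 := hx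
      linarith
  calc (1 + dist f f' * c⁻¹)⁻¹ * extFn f' x
      ≤ (1 + dist f f' * c⁻¹)⁻¹ * (1 + dist f f' * c⁻¹) := by
        apply mul_le_mul_of_nonneg_left key
        positivity
    _ = 1 := inv_mul_cancel₀ (ne_of_gt hδ)

lemma volume_bodyOf_le (hc : 0 < c) {f f'} (hf : goodFun (d := d) γ c f)
    (hf' : goodFun (d := d) γ c f') :
    volume (bodyOf f) ≤ ENNReal.ofReal ((1 + dist f f' * c⁻¹) ^ d) * volume (bodyOf f') := by
  calc volume (bodyOf f) ≤ volume ((1 + dist f f' * c⁻¹) • bodyOf f') :=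
        measure_mono (bodyOf_subset_smul hc hf hf')
    _ = ENNReal.ofReal ((1 + dist f f' * c⁻¹) ^ d) * volume (bodyOf f') := by
        rw [Measure.addHaar_smul, finrank_euclideanSpace_fin, abs_of_nonneg (by positivity)]

section bodySide
variable {K : Set (Euc d)} {γ : ℝ}

lemma absorbent_of_ball (hγ : 0 < γ) (hball : closedBall (0 : Euc d) γ ⊆ K) :
    Absorbent ℝ K :=
  (absorbent_ball_zero hγ).mono (ball_subset_closedBall.trans hball)

lemma mem_iff_gauge_le_one (hK : IsCompact K) (hstar : ∀ x ∈ K, segment ℝ 0 x ⊆ K)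
    (hγ : 0 < γ) (hball : closedBall (0 : Euc d) γ ⊆ K) (x : Euc d) :
    x ∈ K ↔ gauge K x ≤ 1 := by
  have habs : Absorbent ℝ K := absorbent_of_ball hγ hball
  constructor
  · intro hx
    exact gauge_le_of_mem zero_le_one (by rw [one_smul]; exact hx)
  · intro hx
    have key : ∀ n : ℕ, ∃ s : ℝ, 1 ≤ s ∧ s ≤ 1 + 1 / (n + 1) ∧ s⁻¹ • x ∈ K := by
      intro n
      have hlt : gauge K x < 1 + 1 / (n + 1) := by
        have : (0:ℝ) < 1 / (n + 1) := by positivity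
        linarith
      obtain ⟨b, hb0, hblt, hbmem⟩ := exists_lt_of_gauge_lt habs hlt
      obtain ⟨y, hy, rfl⟩ := hbmem
      rcases le_or_gt b 1 with hb1 | hb1
      · refine ⟨1, le_refl 1, by
          have : (0:ℝ) < 1 / ((n:ℝ) + 1) := by positivity
          linarith, ?_⟩
        rw [inv_one, one_smul]
        exact hstar y hy ⟨1 - b, b, by linarith, le_of_lt hb0, by ring, by
          rw [smul_zero, zero_add]⟩
      · refine ⟨b, le_of_lt hb1, le_of_lt hblt, ?_⟩
        rw [inv_smul_smul₀ (ne_of_gt hb0)]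
        exact hy
    choose s hs1 hs2 hsm using key
    have hlim : Tendsto s atTop (nhds 1) := by
      have h1 : Tendsto (fun n : ℕ => 1 + 1 / ((n : ℝ) + 1)) atTop (nhds 1) := by
        have := tendsto_one_div_add_atTop_nhds_zero_nat (𝕜 := ℝ)
        have h2 := this.const_add (1 : ℝ)
        simpa using h2
      exact tendsto_of_tendsto_of_tendsto_of_le_of_le tendsto_const_nhds h1 hs1 hs2
    have hlim2 : Tendsto (fun n => (s n)⁻¹ • x) atTop (nhds x) := by
      have h1 : Tendsto (fun n => (s n)⁻¹) atTop (nhds 1) := by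
        simpa using hlim.inv₀ one_ne_zero
      simpa using h1.smul (tendsto_const_nhds (x := x))
    exact hK.isClosed.mem_of_tendsto hlim2 (Eventually.of_forall hsm)

lemma gauge_le_of_ball (hγ : 0 < γ) (hball : closedBall (0 : Euc d) γ ⊆ K) (x : Euc d) :
    gauge K x ≤ γ⁻¹ * ‖x‖ := by
  have h := gauge_mono ((absorbent_ball_zero hγ).mono ball_subset_closedBall) hball x
  rwa [gauge_closedBall (le_of_lt hγ), div_eq_inv_mul] at h

lemma le_gauge_of_subset_ball {R : ℝ} (hR : 0 < R) (hγ : 0 < γ)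
    (hball : closedBall (0 : Euc d) γ ⊆ K) (hsub : K ⊆ closedBall (0 : Euc d) R)
    (x : Euc d) : R⁻¹ * ‖x‖ ≤ gauge K x := by
  have h := gauge_mono (absorbent_of_ball hγ hball) hsub x
  rwa [gauge_closedBall (le_of_lt hR), div_eq_inv_mul] at h

end bodySide

section boundK

/-- The uniform outer radius bound for bodies in the class. -/
def Rbound (d : ℕ) (γ : ℝ) : ℝ := 2 * ((d : ℝ) / γ) ^ (d - 1)

lemma Rbound_pos {d : ℕ} (hd : 1 ≤ d) {γ : ℝ} (hγ : 0 < γ) : 0 < Rbound d γ := by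
  have : (0:ℝ) < (d:ℝ) / γ := by
    have : (0:ℝ) < (d:ℝ) := by exact_mod_cast hd
    positivity
  unfold Rbound
  positivity

lemma subset_closedBall_of_class {d : ℕ} (hd : 1 ≤ d) {γ : ℝ} (hγ : 0 < γ)
    {K : Set (Euc d)} (hker : closedBall (0 : Euc d) γ ⊆ starKernel K)
    (hvol : volume K = 1) : K ⊆ closedBall (0 : Euc d) (Rbound d γ) := by
  intro x hx
  rw [mem_closedBall, dist_zero_right]
  rcases eq_or_ne x 0 with rfl | hx0
  · simp [le_of_lt (Rbound_pos hd hγ)]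
  have hr : 0 < ‖x‖ := norm_pos_iff.2 hx0
  set r : ℝ := ‖x‖ with hrdef
  -- orthonormal basis with first vector in direction x
  have hcard : Module.finrank ℝ (Euc d) = Fintype.card (Fin d) := by
    simp [finrank_euclideanSpace_fin]
  set i0 : Fin d := ⟨0, hd⟩ with hi0
  set u : Euc d := r⁻¹ • x with hu
  have hunorm : ‖u‖ = 1 := by
    rw [hu, norm_smul, Real.norm_eq_abs, abs_of_pos (by positivity), inv_mul_cancel₀ (ne_of_gt hr)]
  have horth : Orthonormal ℝ (Set.restrict {i0} (fun _ : Fin d => u)) := by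
    constructor
    · rintro ⟨i, hi⟩
      exact hunorm
    · rintro ⟨i, hi⟩ ⟨j, hj⟩ hij
      exact absurd (Subtype.ext ((Set.eq_of_mem_singleton hi).trans
        (Set.eq_of_mem_singleton hj).symm)) hij
  obtain ⟨b, hb⟩ := horth.exists_orthonormalBasis_extension_of_card_eq hcard
  have hbu : b i0 = u := hb i0 rfl
  set a : ℝ := γ / (2 * d) with ha
  have hd' : (0:ℝ) < d := by exact_mod_cast hd
  have ha0 : 0 < a := by positivity
  classical
  set box : Set (EuclideanSpace ℝ (Fin d)) :=
    WithLp.ofLp ⁻¹' Set.univ.pi (fun i => if i = i0 then Set.Icc 0 (r / 2) else Set.Icc (-a) a) with hbox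
  have hboxmeas : MeasurableSet box := by
    apply measurableSet_preimage (PiLp.volume_preserving_ofLp (Fin d)).measurable
    apply MeasurableSet.univ_pi
    intro i
    split_ifs <;> exact measurableSet_Icc
  -- the box is inside K
  have hsub : b.repr ⁻¹' box ⊆ K := by
    intro p hp
    simp only [Set.mem_preimage, hbox, Set.mem_pi, Set.mem_univ, forall_true_left] at hp
    set y : EuclideanSpace ℝ (Fin d) := b.repr p with hy
    have hy0 : y i0 ∈ Set.Icc (0:ℝ) (r/2) := by
      have h := hp i0; simpa using h
    have hyi : ∀ i, i ≠ i0 → |y i| ≤ a := by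
      intro i hi
      have h := hp i; simp only [if_neg hi] at h
      exact abs_le.2 ⟨h.1, h.2⟩
    set v : Euc d := p - y i0 • u with hv
    have hvsum : v = ∑ i ∈ Finset.univ.erase i0, y i • b i := by
      have hrepr := b.sum_repr p
      rw [← Finset.add_sum_erase Finset.univ (fun i => b.repr p i • b i)
        (Finset.mem_univ i0)] at hrepr
      rw [hv, ← hrepr, hbu]
      abel
    have hvnorm : ‖v‖ ≤ γ / 2 := by
      rw [hvsum]
      calc ‖∑ i ∈ Finset.univ.erase i0, y i • b i‖
          ≤ ∑ i ∈ Finset.univ.erase i0, ‖y i • b i‖ := norm_sum_le _ _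
        _ ≤ ∑ _i ∈ Finset.univ.erase i0, a := by
            apply Finset.sum_le_sum
            intro i hi
            rw [norm_smul, Real.norm_eq_abs, b.orthonormal.1 i, mul_one]
            exact hyi i (Finset.ne_of_mem_erase hi)
        _ = (Finset.univ.erase i0).card * a := by rw [Finset.sum_const, nsmul_eq_mul]
        _ ≤ d * a := by
            apply mul_le_mul_of_nonneg_right _ (le_of_lt ha0)
            have : (Finset.univ.erase i0).card ≤ (Finset.univ : Finset (Fin d)).card :=
              Finset.card_le_card (Finset.erase_subset _ _)
            have h2 : ((Finset.univ : Finset (Fin d)).card : ℝ) = d := by simp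
            calc ((Finset.univ.erase i0).card : ℝ) ≤ _ := by exact_mod_cast this
              _ = (d:ℝ) := h2
        _ = γ / 2 := by rw [ha]; field_simp; all_goals ring
    set t : ℝ := y i0 / r with htdef
    have ht0 : 0 ≤ t := div_nonneg hy0.1 (le_of_lt hr)
    have ht2 : t ≤ 1 / 2 := by
      rw [htdef, div_le_div_iff₀ hr (by norm_num)]
      linarith [hy0.2]
    have h1t : (1:ℝ)/2 ≤ 1 - t := by linarith
    have h1t0 : 0 < 1 - t := by linarith
    set z : Euc d := (1 - t)⁻¹ • v with hz
    have hznorm : ‖z‖ ≤ γ := by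
      rw [hz, norm_smul, Real.norm_eq_abs, abs_of_pos (by positivity)]
      calc (1 - t)⁻¹ * ‖v‖ ≤ 2 * (γ/2) := by
            apply mul_le_mul _ hvnorm (norm_nonneg v) (by norm_num)
            rw [← one_div]
            rw [div_le_iff₀ h1t0]
            linarith
        _ = γ := by ring
    have hzK : z ∈ starKernel K := hker (by rwa [mem_closedBall, dist_zero_right])
    have hpseg : p ∈ segment ℝ z x := by
      refine ⟨1 - t, t, le_of_lt h1t0, ht0, by ring, ?_⟩
      rw [hz, smul_smul, mul_inv_cancel₀ (ne_of_gt h1t0), one_smul]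
      have : t • x = y i0 • u := by
        rw [hu, smul_smul, htdef, div_eq_mul_inv]
      rw [this, hv]
      abel
    exact hzK.2 x hx hpseg
  -- volume computation
  set boxPi : Set (Fin d → ℝ) :=
    Set.univ.pi (fun i => if i = i0 then Set.Icc 0 (r / 2) else Set.Icc (-a) a) with hboxPi
  have hboxPimeas : MeasurableSet boxPi := by
    apply MeasurableSet.univ_pi
    intro i
    split_ifs <;> exact measurableSet_Icc
  have hvolbox : volume (b.repr ⁻¹' box) =
      ENNReal.ofReal (r/2) * ENNReal.ofReal (2*a) ^ (d - 1) := by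
    rw [b.measurePreserving_repr.measure_preimage hboxmeas.nullMeasurableSet]
    have hpre : (@WithLp.ofLp 2 (Fin d → ℝ)) ⁻¹' boxPi = box := rfl
    have h2 : volume box = volume boxPi := by
      rw [← hpre]
      exact (PiLp.volume_preserving_ofLp (Fin d)).measure_preimage
        hboxPimeas.nullMeasurableSet
    rw [h2, hboxPi, volume_pi_pi]
    rw [← Finset.mul_prod_erase Finset.univ _ (Finset.mem_univ i0), if_pos rfl]
    have h3 : ∀ i ∈ Finset.univ.erase i0,
        volume (if i = i0 then Set.Icc (0:ℝ) (r/2) else Set.Icc (-a) a)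
          = ENNReal.ofReal (2*a) := by
      intro i hi
      rw [if_neg (Finset.ne_of_mem_erase hi), Real.volume_Icc]
      congr 1; ring
    rw [Finset.prod_congr rfl h3, Finset.prod_const, Real.volume_Icc, sub_zero,
      Finset.card_erase_of_mem (Finset.mem_univ i0), Finset.card_univ, Fintype.card_fin]
  -- conclude
  have hle1 : volume (b.repr ⁻¹' box) ≤ 1 := by rw [← hvol]; exact measure_mono hsub
  rw [hvolbox, ← ENNReal.ofReal_pow (by positivity), ← ENNReal.ofReal_mul (by positivity),
    ← ENNReal.ofReal_one] at hle1
  have hle2 : (r/2) * (2*a)^(d-1) ≤ 1 :=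
    (ENNReal.ofReal_le_ofReal_iff zero_le_one).1 hle1
  have h2a : 2*a = γ/(d:ℝ) := by rw [ha]; field_simp; all_goals ring
  rw [h2a] at hle2
  have hq : (0:ℝ) < (γ/(d:ℝ))^(d-1) := by positivity
  have hrle : r ≤ 2 / ((γ/(d:ℝ))^(d-1)) := by
    rw [le_div_iff₀ hq]
    nlinarith [hle2]
  calc ‖x‖ = r := hrdef.symm
    _ ≤ 2 / ((γ/(d:ℝ))^(d-1)) := hrle
    _ = Rbound d γ := by
        rw [Rbound, ← inv_div γ (d:ℝ), inv_pow, div_eq_mul_inv]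



end boundK

section direction1
variable {γ : ℝ} {K : Set (Euc d)}

lemma gauge_lipschitz_of_kernel (hK : IsCompact K) (hstar : ∀ x ∈ K, segment ℝ 0 x ⊆ K)
    (hγ : 0 < γ) (hker : closedBall (0 : Euc d) γ ⊆ starKernel K) (x y : Euc d) :
    gauge K x ≤ gauge K y + γ⁻¹ * ‖x - y‖ := by
  have hball : closedBall (0 : Euc d) γ ⊆ K := fun w hw => (hker hw).1
  rcases eq_or_ne x y with rfl | hxy
  · simp
  have hz : x - y ≠ 0 := sub_ne_zero.2 hxy
  have hnz : 0 < ‖x - y‖ := norm_pos_iff.2 hz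
  set lam : ℝ := γ⁻¹ * ‖x - y‖ with hlam
  have hlam0 : 0 < lam := mul_pos (inv_pos.2 hγ) hnz
  have core : ∀ s : ℝ, gauge K y < s → gauge K x ≤ s + lam := by
    intro s hs
    have hs0 : 0 < s := lt_of_le_of_lt (gauge_nonneg y) hs
    have hsl : 0 < s + lam := by linarith
    -- kernel point
    set w : Euc d := (γ * ‖x - y‖⁻¹) • (x - y) with hw
    have hwball : w ∈ closedBall (0 : Euc d) γ := by
      rw [mem_closedBall, dist_zero_right, hw, norm_smul, Real.norm_eq_abs,
        abs_of_pos (mul_pos hγ (inv_pos.2 hnz)), mul_assoc,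
        inv_mul_cancel₀ (norm_ne_zero_iff.2 hz), mul_one]
    have hwker := hker hwball
    -- scaled point of K
    set y' : Euc d := s⁻¹ • y with hy'
    have hy'K : y' ∈ K := by
      rw [mem_iff_gauge_le_one hK hstar hγ hball, hy',
        gauge_smul_of_nonneg (le_of_lt (inv_pos.2 hs0))]
      show s⁻¹ * gauge K y ≤ 1
      rw [← inv_mul_cancel₀ (ne_of_gt hs0)]
      exact mul_le_mul_of_nonneg_left (le_of_lt hs) (le_of_lt (inv_pos.2 hs0))
    -- the convex combination
    have hp : (s + lam)⁻¹ • x = (lam/(s+lam)) • w + (s/(s+lam)) • y' := by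
      rw [hw, hy', smul_smul, smul_smul]
      have hkey : lam * (γ * ‖x - y‖⁻¹) = 1 := by
        rw [hlam]; field_simp
      have e1 : lam/(s+lam) * (γ * ‖x - y‖⁻¹) = (s+lam)⁻¹ := by
        rw [div_mul_eq_mul_div, hkey, one_div]
      have e2 : s/(s+lam) * s⁻¹ = (s+lam)⁻¹ := by
        rw [div_mul_eq_mul_div, mul_inv_cancel₀ (ne_of_gt hs0), one_div]
      rw [e1, e2, ← smul_add]
      congr 1
      abel
    have hpK : (s + lam)⁻¹ • x ∈ K := by
      rw [hp]
      exact hwker.2 y' hy'K ⟨lam/(s+lam), s/(s+lam),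
        (div_pos hlam0 hsl).le, (div_pos hs0 hsl).le,
        by rw [← add_div, add_comm, div_self (ne_of_gt hsl)], rfl⟩
    have : x ∈ (s + lam) • K :=
      ⟨(s + lam)⁻¹ • x, hpK, by exact smul_inv_smul₀ (ne_of_gt hsl) x⟩
    exact gauge_le_of_mem (le_of_lt hsl) this
  apply le_of_forall_pos_le_add
  intro ε hε
  have := core (gauge K y + ε) (by linarith)
  linarith

lemma continuous_gauge_of_kernel (hK : IsCompact K) (hstar : ∀ x ∈ K, segment ℝ 0 x ⊆ K)
    (hγ : 0 < γ) (hker : closedBall (0 : Euc d) γ ⊆ starKernel K) :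
    Continuous (gauge K) := by
  apply LipschitzWith.continuous (K := Real.toNNReal γ⁻¹)
  apply LipschitzWith.of_dist_le_mul
  intro x y
  rw [Real.dist_eq, dist_eq_norm, Real.coe_toNNReal _ (by positivity)]
  rw [abs_sub_le_iff]
  constructor
  · linarith [gauge_lipschitz_of_kernel hK hstar hγ hker x y]
  · have := gauge_lipschitz_of_kernel hK hstar hγ hker y x
    rw [norm_sub_rev] at this
    linarith

variable (γ K) in
/-- The gauge of a star body, as a bounded continuous function on the sphere. -/
def fK (hK : IsCompact K) (hstar : ∀ x ∈ K, segment ℝ 0 x ⊆ K) (hγ : 0 < γ)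
    (hker : closedBall (0 : Euc d) γ ⊆ starKernel K) : sphere (0 : Euc d) 1 →ᵇ ℝ :=
  BoundedContinuousFunction.mkOfCompact
    ⟨fun u => gauge K (u : Euc d),
      (continuous_gauge_of_kernel hK hstar hγ hker).comp continuous_subtype_val⟩

lemma extFn_fK (hK : IsCompact K) (hstar : ∀ x ∈ K, segment ℝ 0 x ⊆ K) (hγ : 0 < γ)
    (hker : closedBall (0 : Euc d) γ ⊆ starKernel K) :
    extFn (fK γ K hK hstar hγ hker) = gauge K := by
  funext x
  rcases eq_or_ne x 0 with rfl | hx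
  · simp [gauge_zero]
  · rw [extFn_of_ne _ hx]
    show ‖x‖ * gauge K (‖x‖⁻¹ • x) = gauge K x
    rw [gauge_smul_of_nonneg (by positivity : (0:ℝ) ≤ ‖x‖⁻¹), smul_eq_mul, ← mul_assoc,
      mul_inv_cancel₀ (norm_ne_zero_iff.2 hx), one_mul]

lemma goodFun_fK (hd : 1 ≤ d) (hK : IsCompact K) (hstar : ∀ x ∈ K, segment ℝ 0 x ⊆ K)
    (hγ : 0 < γ) (hker : closedBall (0 : Euc d) γ ⊆ starKernel K) (hvol : volume K = 1) :
    goodFun γ (Rbound d γ)⁻¹ (fK γ K hK hstar hγ hker) := by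
  have hball : closedBall (0 : Euc d) γ ⊆ K := fun w hw => (hker hw).1
  have hsubR : K ⊆ closedBall (0 : Euc d) (Rbound d γ) :=
    subset_closedBall_of_class hd hγ hker hvol
  constructor
  · intro u
    have hu : ‖(u : Euc d)‖ = 1 := mem_sphere_zero_iff_norm.1 u.2
    constructor
    · have := le_gauge_of_subset_ball (Rbound_pos hd hγ) hγ hball hsubR (u : Euc d)
      rw [hu, mul_one] at this
      exact this
    · have := gauge_le_of_ball hγ hball (u : Euc d)
      rw [hu, mul_one] at this
      exact this
  · intro x y
    rw [extFn_fK hK hstar hγ hker]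
    exact gauge_lipschitz_of_kernel hK hstar hγ hker x y

lemma bodyOf_fK (hK : IsCompact K) (hstar : ∀ x ∈ K, segment ℝ 0 x ⊆ K) (hγ : 0 < γ)
    (hker : closedBall (0 : Euc d) γ ⊆ starKernel K) :
    bodyOf (fK γ K hK hstar hγ hker) = K := by
  have hball : closedBall (0 : Euc d) γ ⊆ K := fun w hw => (hker hw).1
  ext x
  rw [bodyOf, Set.mem_setOf_eq, extFn_fK hK hstar hγ hker,
    ← mem_iff_gauge_le_one hK hstar hγ hball]

end direction1

section compactness
variable (γ c : ℝ)

lemma continuous_extFn_apply (x : Euc d) :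
    Continuous fun f : sphere (0 : Euc d) 1 →ᵇ ℝ => extFn f x := by
  rcases eq_or_ne x 0 with rfl | hx
  · simp only [extFn_zero]; exact continuous_const
  · have : (fun f : sphere (0 : Euc d) 1 →ᵇ ℝ => extFn f x)
        = fun f => ‖x‖ * f ⟨‖x‖⁻¹ • x, dir_mem_sphere hx⟩ :=
      funext fun f => extFn_of_ne f hx
    rw [this]
    exact continuous_const.mul (continuous_eval_const _)

lemma isClosed_goodFun : IsClosed {f : sphere (0 : Euc d) 1 →ᵇ ℝ | goodFun γ c f} := by
  have : {f : sphere (0 : Euc d) 1 →ᵇ ℝ | goodFun γ c f}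
      = ((⋂ u, {f : sphere (0 : Euc d) 1 →ᵇ ℝ | c ≤ f u} ∩ {f | f u ≤ γ⁻¹}) ∩
        ⋂ x, ⋂ y, {f : sphere (0 : Euc d) 1 →ᵇ ℝ |
          extFn f x ≤ extFn f y + γ⁻¹ * ‖x - y‖}) := by
    ext f
    simp only [goodFun, Set.mem_setOf_eq, Set.mem_inter_iff, Set.mem_iInter]
  rw [this]
  apply IsClosed.inter
  · apply isClosed_iInter
    intro u
    exact (isClosed_le continuous_const
        (continuous_eval_const u)).inter
      (isClosed_le (continuous_eval_const u) continuous_const)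
  · apply isClosed_iInter; intro x; apply isClosed_iInter; intro y
    exact isClosed_le (continuous_extFn_apply x)
      ((continuous_extFn_apply y).add continuous_const)

variable {γ c}

lemma volume_bodyOf_eq_one_of_tendsto (hγ : 0 < γ) (hc : 0 < c)
    {g : ℕ → sphere (0 : Euc d) 1 →ᵇ ℝ} {f : sphere (0 : Euc d) 1 →ᵇ ℝ}
    (hg : ∀ n, goodFun γ c (g n)) (hgvol : ∀ n, volume (bodyOf (g n)) = 1)
    (hf : goodFun γ c f) (htend : Tendsto g atTop (nhds f)) :
    volume (bodyOf f) = 1 := by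
  have hfin : volume (bodyOf f) ≠ ⊤ := by
    apply ne_of_lt
    calc volume (bodyOf f) ≤ volume (closedBall (0 : Euc d) c⁻¹) :=
          measure_mono (bodyOf_subset_closedBall hc hf)
      _ < ⊤ := measure_closedBall_lt_top
  set v : ℝ := (volume (bodyOf f)).toReal with hv
  have hdist : Tendsto (fun n => dist (g n) f) atTop (nhds 0) :=
    tendsto_iff_dist_tendsto_zero.1 htend
  have hfact : Tendsto (fun n => (1 + dist (g n) f * c⁻¹) ^ d) atTop (nhds 1) := by
    have h1 : Tendsto (fun n => 1 + dist (g n) f * c⁻¹) atTop (nhds 1) := by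
      have := (hdist.mul_const c⁻¹).const_add (1:ℝ)
      simpa using this
    have := h1.pow d
    simpa using this
  have hub : ∀ n, v ≤ (1 + dist (g n) f * c⁻¹) ^ d := by
    intro n
    have h := volume_bodyOf_le hc hf (hg n)
    rw [hgvol n, mul_one, dist_comm f (g n)] at h
    exact ENNReal.toReal_le_of_le_ofReal (by positivity) h
  have hlb : ∀ n, (1:ℝ) ≤ (1 + dist (g n) f * c⁻¹) ^ d * v := by
    intro n
    have h := volume_bodyOf_le hc (hg n) hf
    rw [hgvol n] at h
    have hrhs : ENNReal.ofReal ((1 + dist (g n) f * c⁻¹) ^ d) * volume (bodyOf f) ≠ ⊤ :=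
      ENNReal.mul_ne_top ENNReal.ofReal_ne_top hfin
    have := ENNReal.toReal_mono hrhs h
    rwa [ENNReal.toReal_one, ENNReal.toReal_mul,
      ENNReal.toReal_ofReal (by positivity)] at this
  have hub' : v ≤ 1 := ge_of_tendsto hfact (Eventually.of_forall hub)
  have hlb' : (1:ℝ) ≤ v := by
    have hmul : Tendsto (fun n => (1 + dist (g n) f * c⁻¹) ^ d * v) atTop (nhds v) := by
      have := hfact.mul_const v
      simpa using this
    exact ge_of_tendsto hmul (Eventually.of_forall hlb)
  have : v = 1 := le_antisymm hub' hlb'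
  rwa [hv, ENNReal.toReal_eq_one_iff] at this

lemma isClosed_constraint (hγ : 0 < γ) (hc : 0 < c) :
    IsClosed {f : sphere (0 : Euc d) 1 →ᵇ ℝ | goodFun γ c f ∧ volume (bodyOf f) = 1} := by
  apply IsSeqClosed.isClosed
  intro g f hg htend
  have hf : goodFun γ c f :=
    (isClosed_goodFun γ c).mem_of_tendsto htend (Eventually.of_forall fun n => (hg n).1)
  exact ⟨hf, volume_bodyOf_eq_one_of_tendsto hγ hc (fun n => (hg n).1)
    (fun n => (hg n).2) hf htend⟩

lemma isCompact_constraint (hd : 1 ≤ d) (hγ : 0 < γ) (hc : 0 < c) :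
    IsCompact {f : sphere (0 : Euc d) 1 →ᵇ ℝ | goodFun γ c f ∧ volume (bodyOf f) = 1} := by
  haveI : CompactSpace (sphere (0 : Euc d) 1) := Metric.sphere.compactSpace _ _
  apply arzela_ascoli₂ (Set.Icc c γ⁻¹) isCompact_Icc _ (isClosed_constraint hγ hc)
  · intro f u hf
    exact ⟨(hf.1.1 u).1, (hf.1.1 u).2⟩
  · intro u
    rw [Metric.equicontinuousAt_iff]
    intro ε hε
    refine ⟨ε * γ, by positivity, ?_⟩
    intro v hv fS
    have hlip := fS.2.1.abs_sub_le (u : Euc d) (v : Euc d)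
    rw [extFn_sphere, extFn_sphere] at hlip
    rw [Real.dist_eq]
    calc |fS.1 u - fS.1 v| ≤ γ⁻¹ * ‖(u:Euc d) - (v:Euc d)‖ := hlip
      _ = γ⁻¹ * dist u v := by rw [Subtype.dist_eq, dist_eq_norm]
      _ < γ⁻¹ * (ε * γ) := by
          apply mul_lt_mul_of_pos_left _ (inv_pos.2 hγ)
          rwa [dist_comm]
      _ = ε := by field_simp
end compactness

section integrals
variable {γ c : ℝ}

lemma integrable_extFn (hγ : 0 < γ) (hc : 0 ≤ c) {f} (hf : goodFun (d := d) γ c f)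
    {μ : Measure (Euc d)} (hμ : Integrable (fun x => ‖x‖) μ) :
    Integrable (extFn f) μ := by
  apply Integrable.mono' (hμ.const_mul γ⁻¹) (hf.continuous hγ).aestronglyMeasurable
  apply Eventually.of_forall
  intro x
  rw [Real.norm_eq_abs, abs_of_nonneg (hf.nonneg hc x)]
  exact hf.le_norm x

/-- The objective as a functional on bounded continuous functions on the sphere. -/
def Gfun (μ ν : Measure (Euc d)) (f : sphere (0 : Euc d) 1 →ᵇ ℝ) : ℝ :=
  (∫ x, extFn f x ∂μ) - ∫ x, extFn f x ∂ν

lemma extFn_sub_bound (f f' : sphere (0 : Euc d) 1 →ᵇ ℝ) (x : Euc d) :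
    |extFn f x - extFn f' x| ≤ dist f f' * ‖x‖ := by
  rcases eq_or_ne x 0 with rfl | hx
  · simp
  · rw [extFn_of_ne f hx, extFn_of_ne f' hx, ← mul_sub, abs_mul,
      abs_of_nonneg (norm_nonneg x), mul_comm]
    apply mul_le_mul_of_nonneg_right _ (norm_nonneg x)
    rw [← Real.dist_eq]
    exact BoundedContinuousFunction.dist_coe_le_dist _

lemma integral_extFn_sub_bound (hγ : 0 < γ) (hc : 0 ≤ c) {f f'}
    (hf : goodFun (d := d) γ c f) (hf' : goodFun (d := d) γ c f')
    {μ : Measure (Euc d)} (hμ : Integrable (fun x => ‖x‖) μ) :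
    |(∫ x, extFn f x ∂μ) - ∫ x, extFn f' x ∂μ| ≤ dist f f' * ∫ x, ‖x‖ ∂μ := by
  rw [← integral_sub (integrable_extFn hγ hc hf hμ) (integrable_extFn hγ hc hf' hμ)]
  calc |∫ x, (extFn f x - extFn f' x) ∂μ| ≤ ∫ x, |extFn f x - extFn f' x| ∂μ := by
        simpa [Real.norm_eq_abs] using
          norm_integral_le_integral_norm (μ := μ) (fun x => extFn f x - extFn f' x)
    _ ≤ ∫ x, dist f f' * ‖x‖ ∂μ := by
        apply integral_mono_of_nonneg (Eventually.of_forall fun x => abs_nonneg _)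
          (hμ.const_mul _) (Eventually.of_forall fun x => extFn_sub_bound f f' x)
    _ = dist f f' * ∫ x, ‖x‖ ∂μ := by rw [integral_const_mul]

lemma continuousOn_Gfun (hγ : 0 < γ) (hc : 0 ≤ c) {μ ν : Measure (Euc d)}
    (hμ : Integrable (fun x => ‖x‖) μ) (hν : Integrable (fun x => ‖x‖) ν) :
    ContinuousOn (Gfun μ ν) {f : sphere (0 : Euc d) 1 →ᵇ ℝ | goodFun γ c f} := by
  set C : ℝ := (∫ x, ‖x‖ ∂μ) + ∫ x, ‖x‖ ∂ν with hC
  have hC0 : 0 ≤ C := by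
    have h1 : 0 ≤ ∫ x, ‖x‖ ∂μ := integral_nonneg fun x => norm_nonneg x
    have h2 : 0 ≤ ∫ x, ‖x‖ ∂ν := integral_nonneg fun x => norm_nonneg x
    linarith
  apply LipschitzOnWith.continuousOn (K := Real.toNNReal C)
  rw [lipschitzOnWith_iff_dist_le_mul]
  intro f hf f' hf'
  rw [Real.dist_eq, Real.coe_toNNReal _ hC0]
  have h1 := integral_extFn_sub_bound hγ hc hf hf' hμ
  have h2 := integral_extFn_sub_bound hγ hc hf hf' hν
  have h3 : Gfun μ ν f - Gfun μ ν f'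
      = ((∫ x, extFn f x ∂μ) - ∫ x, extFn f' x ∂μ)
        - ((∫ x, extFn f x ∂ν) - ∫ x, extFn f' x ∂ν) := by
    rw [Gfun, Gfun]; ring
  rw [h3, hC]
  calc |((∫ x, extFn f x ∂μ) - ∫ x, extFn f' x ∂μ)
        - ((∫ x, extFn f x ∂ν) - ∫ x, extFn f' x ∂ν)|
      ≤ |(∫ x, extFn f x ∂μ) - ∫ x, extFn f' x ∂μ|
        + |(∫ x, extFn f x ∂ν) - ∫ x, extFn f' x ∂ν| := abs_sub _ _
    _ ≤ dist f f' * ∫ x, ‖x‖ ∂μ + dist f f' * ∫ x, ‖x‖ ∂ν := add_le_add h1 h2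
    _ = ((∫ x, ‖x‖ ∂μ) + ∫ x, ‖x‖ ∂ν) * dist f f' := by ring

end integrals

end SBaux

/-- Existence of minimizers of the adversarial objective over the class
`S^d(γ,1)` of unit-volume star bodies with `γ·B^d` contained in the kernel. -/
theorem exists_minimizer_Fobj {d : ℕ} (hd : 1 ≤ d) (γ : ℝ) (hγ : 0 < γ)
    (μ ν : Measure (Euc d)) [IsProbabilityMeasure μ] [IsProbabilityMeasure ν]
    (hμ : Integrable (fun x => ‖x‖) μ) (hν : Integrable (fun x => ‖x‖) ν)
    (hne : ∃ K : Set (Euc d), IsStarBody K ∧ closedBall (0 : Euc d) γ ⊆ starKernel K ∧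
      volume K = 1) :
    ∃ Kstar : Set (Euc d),
      (IsStarBody Kstar ∧ closedBall (0 : Euc d) γ ⊆ starKernel Kstar ∧ volume Kstar = 1) ∧
      ∀ K : Set (Euc d), IsStarBody K → closedBall (0 : Euc d) γ ⊆ starKernel K →
        volume K = 1 → Fobj Kstar μ ν ≤ Fobj K μ ν := by
  classical
  obtain ⟨K0, hK0body, hK0ker, hK0vol⟩ := hne
  set c : ℝ := (SBaux.Rbound d γ)⁻¹ with hcdef
  have hc : 0 < c := inv_pos.2 (SBaux.Rbound_pos hd hγ)
  set S : Set (sphere (0 : Euc d) 1 →ᵇ ℝ) :=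
    {f | SBaux.goodFun γ c f ∧ volume (SBaux.bodyOf f) = 1} with hSdef
  have hf0 : SBaux.fK γ K0 hK0body.1 hK0body.2.2.1 hγ hK0ker ∈ S := by
    refine ⟨SBaux.goodFun_fK hd hK0body.1 hK0body.2.2.1 hγ hK0ker hK0vol, ?_⟩
    rw [SBaux.bodyOf_fK]; exact hK0vol
  have hcpt : IsCompact S := SBaux.isCompact_constraint hd hγ hc
  have hcont : ContinuousOn (SBaux.Gfun μ ν) S :=
    (SBaux.continuousOn_Gfun hγ hc.le hμ hν).mono fun f hf => hf.1
  obtain ⟨fstar, hfstarS, hmin⟩ := hcpt.exists_isMinOn ⟨_, hf0⟩ hcont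
  refine ⟨SBaux.bodyOf fstar,
    ⟨SBaux.isStarBody_bodyOf hγ hc hfstarS.1, SBaux.kernel_bodyOf hγ hfstarS.1, hfstarS.2⟩, ?_⟩
  intro K hKbody hKker hKvol
  have hFstar : Fobj (SBaux.bodyOf fstar) μ ν = SBaux.Gfun μ ν fstar := by
    rw [Fobj, SBaux.Gfun, SBaux.gauge_bodyOf hc.le hfstarS.1]
  have hfKS : SBaux.fK γ K hKbody.1 hKbody.2.2.1 hγ hKker ∈ S := by
    refine ⟨SBaux.goodFun_fK hd hKbody.1 hKbody.2.2.1 hγ hKker hKvol, ?_⟩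
    rw [SBaux.bodyOf_fK]; exact hKvol
  have hFK : Fobj K μ ν = SBaux.Gfun μ ν (SBaux.fK γ K hKbody.1 hKbody.2.2.1 hγ hKker) := by
    rw [Fobj, SBaux.Gfun, SBaux.extFn_fK]
  rw [hFstar, hFK]
  exact hmin hfKS
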